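/- Let P and Q be finite connected posets on disjoint sets X₁ and X₂. Then δ(P ↘ Q) = P ⊗ Q + (P ⊗ 1) ↘ δ(Q) + (1 ⊗ P) ↘ δ(Q). Explicitly, Σ_{v ∈ X₂} δ(P ↘_v Q) = P ⊗ Q + (1/|min(Q)|) Σ_{J ◎ Q} [ (P ↘ J) ⊗ (Q \ J) + J ⊗ (P ↘ (Q \ J)) ], where (P ⊗ 1) ↘ (A ⊗ B) := (P ↘ A) ⊗ B and (1 ⊗ P) ↘ (A ⊗ B) := A ⊗ (P ↘ B). -/

import Mathlib

open scoped Classical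

/-- A finite poset on a subset (`carrier`) of an ambient type `α`. -/
structure FinPoset (α : Type*) where
  carrier : Finset α
  le : α → α → Prop
  mem_of_le : ∀ ⦃x y⦄, le x y → x ∈ carrier ∧ y ∈ carrier
  le_refl : ∀ x ∈ carrier, le x x
  le_trans : ∀ ⦃x y z⦄, le x y → le y z → le x z
  le_antisymm : ∀ ⦃x y⦄, le x y → le y x → x = y

namespace FinPoset

variable {α : Type*} [DecidableEq α]

/-- The strict order `x <_P y`. -/
def lt (P : FinPoset α) (x y : α) : Prop := P.le x y ∧ x ≠ y

/-- `min(P)`: the set of minimal elements of `P`. -/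
noncomputable def minSet (P : FinPoset α) : Finset α :=
  P.carrier.filter (fun x => ∀ y, P.le y x → y = x)

/-- Connectivity of a subset `S`, for the graph with edges between comparable pairs. -/
def ConnOn (P : FinPoset α) (S : Set α) : Prop :=
  ∀ x ∈ S, ∀ y ∈ S,
    Relation.ReflTransGen (fun a b => a ∈ S ∧ b ∈ S ∧ (P.le a b ∨ P.le b a)) x y

/-- A finite poset is connected if it is nonempty and any two elements are linked by a
chain of comparable pairs. -/
def Connected (P : FinPoset α) : Prop :=
  P.carrier.Nonempty ∧ P.ConnOn ↑P.carrier

/-- `I` is a connected component of `S` (for the comparability graph of `P`). -/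
def IsCC (P : FinPoset α) (S I : Set α) : Prop :=
  I.Nonempty ∧ I ⊆ S ∧ P.ConnOn I ∧
    ∀ x ∈ I, ∀ y ∈ S, (P.le x y ∨ P.le y x) → y ∈ I

/-- `I_- = {x ∈ P \ I : ∃ y ∈ I, x ≤_P y}`. -/
noncomputable def below (P : FinPoset α) (I : Finset α) : Finset α :=
  (P.carrier \ I).filter (fun x => ∃ y ∈ I, P.le x y)

/-- `I ◎ P` : `I_-` is a singleton `{w}` with `w ∈ min(P)`, and `I` is a connected
component of `{x ∈ P : w <_P x}`. -/
def Circ (P : FinPoset α) (I : Finset α) : Prop :=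
  ∃ w, P.below I = {w} ∧ w ∈ P.minSet ∧
    P.IsCC {x | x ∈ P.carrier ∧ P.lt w x} ↑I

/-- The induced poset on a subset `S`. -/
def restrict (P : FinPoset α) (S : Finset α) : FinPoset α where
  carrier := P.carrier ∩ S
  le x y := P.le x y ∧ x ∈ S ∧ y ∈ S
  mem_of_le := by
    intro x y h
    rcases P.mem_of_le h.1 with ⟨hx, hy⟩
    exact ⟨Finset.mem_inter.2 ⟨hx, h.2.1⟩, Finset.mem_inter.2 ⟨hy, h.2.2⟩⟩
  le_refl := by
    intro x hx
    rcases Finset.mem_inter.1 hx with ⟨h1, h2⟩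
    exact ⟨P.le_refl x h1, h2, h2⟩
  le_trans := by
    rintro x y z ⟨h1, hx, hy⟩ ⟨h2, _, hz⟩
    exact ⟨P.le_trans h1 h2, hx, hz⟩
  le_antisymm := by
    rintro x y ⟨h1, _, _⟩ ⟨h2, _, _⟩
    exact P.le_antisymm h1 h2

/-- The grafting `P ↘_v Q` of `P` above the vertex `v` of `Q` (auxiliary version, with
the disjointness hypotheses as arguments). -/
def graftAux (P Q : FinPoset α) (v : α) (hd : Disjoint P.carrier Q.carrier)
    (hv : v ∈ Q.carrier) : FinPoset α where
  carrier := P.carrier ∪ Q.carrier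
  le x y := P.le x y ∨ Q.le x y ∨ (Q.le x v ∧ y ∈ P.carrier)
  mem_of_le := by
    rintro x y (h | h | ⟨h1, h2⟩)
    · rcases P.mem_of_le h with ⟨hx, hy⟩
      exact ⟨Finset.mem_union_left _ hx, Finset.mem_union_left _ hy⟩
    · rcases Q.mem_of_le h with ⟨hx, hy⟩
      exact ⟨Finset.mem_union_right _ hx, Finset.mem_union_right _ hy⟩
    · exact ⟨Finset.mem_union_right _ (Q.mem_of_le h1).1, Finset.mem_union_left _ h2⟩
  le_refl := by
    intro x hx
    rcases Finset.mem_union.1 hx with h | h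
    · exact Or.inl (P.le_refl x h)
    · exact Or.inr (Or.inl (Q.le_refl x h))
  le_trans := by
    rintro x y z (h1 | h1 | ⟨h1, h1'⟩) (h2 | h2 | ⟨h2, h2'⟩)
    · exact Or.inl (P.le_trans h1 h2)
    · exact absurd (Q.mem_of_le h2).1 (Finset.disjoint_left.1 hd (P.mem_of_le h1).2)
    · exact absurd (Q.mem_of_le h2).1 (Finset.disjoint_left.1 hd (P.mem_of_le h1).2)
    · exact absurd (P.mem_of_le h2).1 (Finset.disjoint_right.1 hd (Q.mem_of_le h1).2)
    · exact Or.inr (Or.inl (Q.le_trans h1 h2))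
    · exact Or.inr (Or.inr ⟨Q.le_trans h1 h2, h2'⟩)
    · exact Or.inr (Or.inr ⟨h1, (P.mem_of_le h2).2⟩)
    · exact absurd (Q.mem_of_le h2).1 (Finset.disjoint_left.1 hd h1')
    · exact absurd (Q.mem_of_le h2).1 (Finset.disjoint_left.1 hd h1')
  le_antisymm := by
    rintro x y (h1 | h1 | ⟨h1, h1'⟩) (h2 | h2 | ⟨h2, h2'⟩)
    · exact P.le_antisymm h1 h2
    · exact absurd (Q.mem_of_le h2).1 (Finset.disjoint_left.1 hd (P.mem_of_le h1).2)
    · exact absurd (Q.mem_of_le h2).1 (Finset.disjoint_left.1 hd (P.mem_of_le h1).2)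
    · exact absurd (P.mem_of_le h2).1 (Finset.disjoint_right.1 hd (Q.mem_of_le h1).2)
    · exact Q.le_antisymm h1 h2
    · exact absurd (Q.mem_of_le h1).1 (Finset.disjoint_left.1 hd h2')
    · exact absurd (P.mem_of_le h2).2 (Finset.disjoint_right.1 hd (Q.mem_of_le h1).1)
    · exact absurd (Q.mem_of_le h2).1 (Finset.disjoint_left.1 hd h1')
    · exact absurd (Q.mem_of_le h1).1 (Finset.disjoint_left.1 hd h2')
  
/-- The grafting `P ↘_v Q` of `P` above the vertex `v` of `Q`: the poset on
`X₁ ⊔ X₂` restricting to `P` on `X₁` and to `Q` on `X₂`, with `q ≤ p` for `q ∈ X₂`,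
`p ∈ X₁` iff `q ≤_Q v`.  (Junk value when the carriers are not disjoint or `v ∉ Q`.) -/
noncomputable def graft (P Q : FinPoset α) (v : α) : FinPoset α :=
  if h : Disjoint P.carrier Q.carrier ∧ v ∈ Q.carrier then P.graftAux Q v h.1 h.2 else P

/-- The set of subsets `I` of the carrier with `I ◎ P`. -/
noncomputable def circSet (P : FinPoset α) : Finset (Finset α) :=
  P.carrier.powerset.filter (fun I => P.Circ I)

/-- Order isomorphisms from `A` to `B`, encoded as maps `α → α` that are the identity
outside of the carrier of `A`. -/
def Isos (A B : FinPoset α) : Set (α → α) :=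
  {f | Set.BijOn f ↑A.carrier ↑B.carrier ∧
    (∀ x ∈ A.carrier, ∀ y ∈ A.carrier, (A.le x y ↔ B.le (f x) (f y))) ∧
    ∀ x, x ∉ A.carrier → f x = x}

/-- `⟨A, B⟩`: the number of order isomorphisms from `A` to `B`. -/
noncomputable def pairing (A B : FinPoset α) : ℕ := Nat.card ↥(Isos A B)

/-- The NAP coproduct `δ(P) = (1/|min(P)|) Σ_{I ◎ P} I ⊗ (P \ I)`, with values in the
rational vector space spanned by pairs of finite posets. -/
noncomputable def delta (P : FinPoset α) : (FinPoset α × FinPoset α) →₀ ℚ :=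
  ((P.minSet.card : ℚ))⁻¹ • ∑ I ∈ P.circSet,
    Finsupp.single (P.restrict I, P.restrict (P.carrier \ I)) (1 : ℚ)

end FinPoset

namespace FinPoset

variable {α : Type*} [DecidableEq α]

omit [DecidableEq α] in
theorem ext' {A B : FinPoset α} (h1 : A.carrier = B.carrier)
    (h2 : ∀ x y, A.le x y ↔ B.le x y) : A = B := by
  obtain ⟨c, l, p1, p2, p3, p4⟩ := A
  obtain ⟨c', l', q1, q2, q3, q4⟩ := B
  simp only at h1 h2
  subst h1
  have hl : l = l' := funext fun x => funext fun y => propext (h2 x y)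
  subst hl
  rfl

omit [DecidableEq α] in
theorem mem_minSet {P : FinPoset α} {x : α} :
    x ∈ P.minSet ↔ x ∈ P.carrier ∧ ∀ y, P.le y x → y = x := Finset.mem_filter

omit [DecidableEq α] in
theorem minSet_nonempty (Q : FinPoset α) (h : Q.carrier.Nonempty) : Q.minSet.Nonempty := by
  obtain ⟨x, hx, hmin⟩ := Q.carrier.exists_min_image
    (fun x => (Q.carrier.filter (fun y => Q.le y x)).card) h
  refine ⟨x, mem_minSet.2 ⟨hx, ?_⟩⟩
  intro y hyx
  by_contra hne
  have hy : y ∈ Q.carrier := (Q.mem_of_le hyx).1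
  have hsub : Q.carrier.filter (fun z => Q.le z y) ⊂ Q.carrier.filter (fun z => Q.le z x) := by
    constructor
    · intro z hz
      rw [Finset.mem_filter] at hz ⊢
      exact ⟨hz.1, Q.le_trans hz.2 hyx⟩
    · intro hsub'
      have hx2 : x ∈ Q.carrier.filter (fun z => Q.le z y) :=
        hsub' (Finset.mem_filter.2 ⟨hx, Q.le_refl x hx⟩)
      exact hne (Q.le_antisymm hyx (Finset.mem_filter.1 hx2).2)
  exact absurd (Finset.card_lt_card hsub) (not_lt.2 (hmin y hy))

section Graft

variable {P Q : FinPoset α} {v : α}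
variable (hd : Disjoint P.carrier Q.carrier) (hv : v ∈ Q.carrier)

local notation "R" => graftAux P Q v hd hv

theorem graft_eq : graft P Q v = R := dif_pos ⟨hd, hv⟩

include hd in
omit [DecidableEq α] in
theorem notQ {x : α} (hx : x ∈ P.carrier) : x ∉ Q.carrier :=
  Finset.disjoint_left.1 hd hx

include hd in
omit [DecidableEq α] in
theorem notP {x : α} (hx : x ∈ Q.carrier) : x ∉ P.carrier :=
  Finset.disjoint_right.1 hd hx

theorem R_carrier : (R).carrier = P.carrier ∪ Q.carrier := rfl

theorem Rle_iff {x y : α} :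
    (R).le x y ↔ P.le x y ∨ Q.le x y ∨ (Q.le x v ∧ y ∈ P.carrier) := Iff.rfl

/-- If `y ∈ Q.carrier` then `R.le x y` is just `Q.le x y`. -/
theorem le_toQ {x y : α} (h : (R).le x y) (hy : y ∈ Q.carrier) : Q.le x y := by
  rcases h with h | h | ⟨h1, h2⟩
  · exact absurd hy (notQ hd (P.mem_of_le h).2)
  · exact h
  · exact absurd hy (notQ hd h2)

/-- If `x ∈ P.carrier` then `R.le x y` is just `P.le x y`. -/
theorem le_fromP {x y : α} (h : (R).le x y) (hx : x ∈ P.carrier) : P.le x y := by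
  rcases h with h | h | ⟨h1, h2⟩
  · exact h
  · exact absurd hx (notP hd (Q.mem_of_le h).1)
  · exact absurd hx (notP hd (Q.mem_of_le h1).1)

theorem le_QP {x y : α} (h : (R).le x y) (hx : x ∈ Q.carrier) (hy : y ∈ P.carrier) :
    Q.le x v := by
  rcases h with h | h | ⟨h1, h2⟩
  · exact absurd hx (notQ hd (P.mem_of_le h).1)
  · exact absurd hy (notP hd (Q.mem_of_le h).2)
  · exact h1

theorem le_vP {y : α} (hy : y ∈ P.carrier) : (R).le v y :=
  Or.inr (Or.inr ⟨Q.le_refl v hv, hy⟩)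

theorem minSet_graftAux : (R).minSet = Q.minSet := by
  ext x
  simp only [mem_minSet]
  constructor
  · rintro ⟨hx, hmin⟩
    rcases Finset.mem_union.1 hx with hx1 | hx2
    · exact absurd (hmin v (le_vP hd hv hx1)) (fun h => notP hd hv (h ▸ hx1))
    · exact ⟨hx2, fun y hy => hmin y (Or.inr (Or.inl hy))⟩
  · rintro ⟨hx, hmin⟩
    exact ⟨Finset.mem_union_right _ hx, fun y hy => hmin y (le_toQ hd hv hy hx)⟩

end Graft
end FinPoset

namespace FinPoset
variable {α : Type*} [DecidableEq α]
section Graft2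
variable {P Q : FinPoset α} {v : α}
variable (hd : Disjoint P.carrier Q.carrier) (hv : v ∈ Q.carrier)
local notation "R" => graftAux P Q v hd hv

theorem restrict_carrier (A : FinPoset α) (S : Finset α) :
    (A.restrict S).carrier = A.carrier ∩ S := rfl

theorem restrict_le (A : FinPoset α) (S : Finset α) (x y : α) :
    (A.restrict S).le x y ↔ A.le x y ∧ x ∈ S ∧ y ∈ S := Iff.rfl

/-- `R|_{X₁} = P`. -/
theorem restrict_P : (R).restrict P.carrier = P := by
  apply ext'
  · ext x
    simp only [restrict_carrier, R_carrier, Finset.mem_inter, Finset.mem_union]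
    tauto
  · intro x y
    simp only [restrict_le]
    constructor
    · rintro ⟨h, hx, hy⟩
      exact le_fromP hd hv h hx
    · intro h
      exact ⟨Or.inl h, (P.mem_of_le h).1, (P.mem_of_le h).2⟩

/-- `R|_{carrier \ X₁} = Q`. -/
theorem restrict_Pc : (R).restrict ((R).carrier \ P.carrier) = Q := by
  apply ext'
  · ext x
    simp only [restrict_carrier, R_carrier, Finset.mem_inter, Finset.mem_sdiff,
      Finset.mem_union]
    constructor
    · rintro ⟨-, h1 | h2, h3⟩
      · exact absurd h1 h3
      · exact h2
    · intro h
      exact ⟨Or.inr h, Or.inr h, notP hd h⟩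
  · intro x y
    simp only [restrict_le]
    constructor
    · rintro ⟨h, hx, hy⟩
      have hy2 : y ∈ Q.carrier := by
        rcases Finset.mem_union.1 (Finset.mem_sdiff.1 hy).1 with h1 | h2
        · exact absurd h1 (Finset.mem_sdiff.1 hy).2
        · exact h2
      exact le_toQ hd hv h hy2
    · intro h
      have hx := (Q.mem_of_le h).1
      have hy := (Q.mem_of_le h).2
      exact ⟨Or.inr (Or.inl h),
        Finset.mem_sdiff.2 ⟨Finset.mem_union_right _ hx, notP hd hx⟩,
        Finset.mem_sdiff.2 ⟨Finset.mem_union_right _ hy, notP hd hy⟩⟩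

theorem graftAux_carrier (A B : FinPoset α) (w : α) (h1 : Disjoint A.carrier B.carrier)
    (h2 : w ∈ B.carrier) : (graftAux A B w h1 h2).carrier = A.carrier ∪ B.carrier := rfl

theorem graftAux_le' (A B : FinPoset α) (w : α) (h1 : Disjoint A.carrier B.carrier)
    (h2 : w ∈ B.carrier) (x y : α) :
    (graftAux A B w h1 h2).le x y ↔ A.le x y ∨ B.le x y ∨ (B.le x w ∧ y ∈ A.carrier) :=
  Iff.rfl

/-- `R|_{X₁ ∪ J} = P ↘_v (Q|_J)` when `v ∈ J ⊆ X₂`. -/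
theorem restrict_union (J : Finset α) (hJ : J ⊆ Q.carrier) (hvJ : v ∈ J) :
    (R).restrict (P.carrier ∪ J) = graft P (Q.restrict J) v := by
  have hd' : Disjoint P.carrier (Q.restrict J).carrier :=
    hd.mono_right (by rw [restrict_carrier]; exact Finset.inter_subset_left)
  have hv' : v ∈ (Q.restrict J).carrier := Finset.mem_inter.2 ⟨hv, hvJ⟩
  rw [graft, dif_pos ⟨hd', hv'⟩]
  apply ext'
  · ext x
    simp only [restrict_carrier, R_carrier, graftAux_carrier, Finset.mem_inter,
      Finset.mem_union]
    have h1 := @hJ x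
    tauto
  · intro x y
    simp only [restrict_le, graftAux_le']
    constructor
    · rintro ⟨h, hx, hy⟩
      rcases h with h | h | ⟨h1, h2⟩
      · exact Or.inl h
      · have hxJ : x ∈ J := (Finset.mem_union.1 hx).resolve_left (notP hd (Q.mem_of_le h).1)
        have hyJ : y ∈ J := (Finset.mem_union.1 hy).resolve_left (notP hd (Q.mem_of_le h).2)
        exact Or.inr (Or.inl ⟨h, hxJ, hyJ⟩)
      · have hxJ : x ∈ J := (Finset.mem_union.1 hx).resolve_left (notP hd (Q.mem_of_le h1).1)
        exact Or.inr (Or.inr ⟨⟨h1, hxJ, hvJ⟩, h2⟩)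
    · rintro (h | ⟨h, hx, hy⟩ | ⟨⟨h1, hx, -⟩, h2⟩)
      · exact ⟨Or.inl h, Finset.mem_union_left _ (P.mem_of_le h).1,
          Finset.mem_union_left _ (P.mem_of_le h).2⟩
      · exact ⟨Or.inr (Or.inl h), Finset.mem_union_right _ hx, Finset.mem_union_right _ hy⟩
      · exact ⟨Or.inr (Or.inr ⟨h1, h2⟩), Finset.mem_union_right _ hx,
          Finset.mem_union_left _ h2⟩

/-- `R|_{carrier \ (X₁ ∪ J)} = Q|_{X₂ \ J}`. -/
theorem restrict_unionc (J : Finset α) (hJ : J ⊆ Q.carrier) :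
    (R).restrict ((R).carrier \ (P.carrier ∪ J)) = Q.restrict (Q.carrier \ J) := by
  apply ext'
  · ext x
    simp only [restrict_carrier, R_carrier, Finset.mem_inter, Finset.mem_sdiff,
      Finset.mem_union]
    have h1 := @hJ x
    have h2 : x ∈ P.carrier → x ∉ Q.carrier := notQ hd
    tauto
  · intro x y
    simp only [restrict_le]
    constructor
    · rintro ⟨h, hx, hy⟩
      obtain ⟨hx1, hx2⟩ := Finset.mem_sdiff.1 hx
      obtain ⟨hy1, hy2⟩ := Finset.mem_sdiff.1 hy
      have hxq : x ∈ Q.carrier := by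
        rcases Finset.mem_union.1 hx1 with h1 | h1
        · exact absurd (Finset.mem_union_left _ h1) hx2
        · exact h1
      have hyq : y ∈ Q.carrier := by
        rcases Finset.mem_union.1 hy1 with h1 | h1
        · exact absurd (Finset.mem_union_left _ h1) hy2
        · exact h1
      exact ⟨le_toQ hd hv h hyq,
        Finset.mem_sdiff.2 ⟨hxq, fun hh => hx2 (Finset.mem_union_right _ hh)⟩,
        Finset.mem_sdiff.2 ⟨hyq, fun hh => hy2 (Finset.mem_union_right _ hh)⟩⟩
    · rintro ⟨h, hx, hy⟩
      obtain ⟨hx1, hx2⟩ := Finset.mem_sdiff.1 hx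
      obtain ⟨hy1, hy2⟩ := Finset.mem_sdiff.1 hy
      refine ⟨Or.inr (Or.inl h), Finset.mem_sdiff.2 ⟨Finset.mem_union_right _ hx1, ?_⟩,
        Finset.mem_sdiff.2 ⟨Finset.mem_union_right _ hy1, ?_⟩⟩
      · exact fun hh => (Finset.mem_union.1 hh).elim (fun hp => notP hd hx1 hp) hx2
      · exact fun hh => (Finset.mem_union.1 hh).elim (fun hp => notP hd hy1 hp) hy2

/-- `R|_J = Q|_J` when `J ⊆ X₂`. -/
theorem restrict_J (J : Finset α) (hJ : J ⊆ Q.carrier) :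
    (R).restrict J = Q.restrict J := by
  apply ext'
  · ext x
    simp only [restrict_carrier, R_carrier, Finset.mem_inter, Finset.mem_union]
    have h1 := @hJ x
    tauto
  · intro x y
    simp only [restrict_le]
    constructor
    · rintro ⟨h, hx, hy⟩
      exact ⟨le_toQ hd hv h (hJ hy), hx, hy⟩
    · rintro ⟨h, hx, hy⟩
      exact ⟨Or.inr (Or.inl h), hx, hy⟩

/-- `R|_{carrier \ J} = P ↘_v (Q|_{X₂ \ J})` when `J ⊆ X₂` and `v ∉ J`. -/
theorem restrict_Jc (J : Finset α) (hJ : J ⊆ Q.carrier) (hvJ : v ∉ J) :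
    (R).restrict ((R).carrier \ J) = graft P (Q.restrict (Q.carrier \ J)) v := by
  have hd' : Disjoint P.carrier (Q.restrict (Q.carrier \ J)).carrier :=
    hd.mono_right (by rw [restrict_carrier]; exact Finset.inter_subset_left)
  have hv' : v ∈ (Q.restrict (Q.carrier \ J)).carrier :=
    Finset.mem_inter.2 ⟨hv, Finset.mem_sdiff.2 ⟨hv, hvJ⟩⟩
  rw [graft, dif_pos ⟨hd', hv'⟩]
  apply ext'
  · ext x
    simp only [restrict_carrier, R_carrier, graftAux_carrier, Finset.mem_inter,
      Finset.mem_sdiff, Finset.mem_union]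
    have h1 := @hJ x
    have h2 : x ∈ P.carrier → x ∉ Q.carrier := notQ hd
    tauto
  · intro x y
    simp only [restrict_le, graftAux_le']
    constructor
    · rintro ⟨h, hx, hy⟩
      obtain ⟨hx1, hx2⟩ := Finset.mem_sdiff.1 hx
      obtain ⟨hy1, hy2⟩ := Finset.mem_sdiff.1 hy
      rcases h with h | h | ⟨h1, h2⟩
      · exact Or.inl h
      · exact Or.inr (Or.inl ⟨h, Finset.mem_sdiff.2 ⟨(Q.mem_of_le h).1, hx2⟩,
          Finset.mem_sdiff.2 ⟨(Q.mem_of_le h).2, hy2⟩⟩)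
      · exact Or.inr (Or.inr ⟨⟨h1, Finset.mem_sdiff.2 ⟨(Q.mem_of_le h1).1, hx2⟩,
          Finset.mem_sdiff.2 ⟨hv, hvJ⟩⟩, h2⟩)
    · rintro (h | ⟨h, hx, hy⟩ | ⟨⟨h1, hx, -⟩, h2⟩)
      · refine ⟨Or.inl h, ?_, ?_⟩
        · exact Finset.mem_sdiff.2 ⟨Finset.mem_union_left _ (P.mem_of_le h).1,
            fun hh => notQ hd (P.mem_of_le h).1 (hJ hh)⟩
        · exact Finset.mem_sdiff.2 ⟨Finset.mem_union_left _ (P.mem_of_le h).2,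
            fun hh => notQ hd (P.mem_of_le h).2 (hJ hh)⟩
      · obtain ⟨hx1, hx2⟩ := Finset.mem_sdiff.1 hx
        obtain ⟨hy1, hy2⟩ := Finset.mem_sdiff.1 hy
        exact ⟨Or.inr (Or.inl h), Finset.mem_sdiff.2 ⟨Finset.mem_union_right _ hx1, hx2⟩,
          Finset.mem_sdiff.2 ⟨Finset.mem_union_right _ hy1, hy2⟩⟩
      · obtain ⟨hx1, hx2⟩ := Finset.mem_sdiff.1 hx
        exact ⟨Or.inr (Or.inr ⟨h1, h2⟩),
          Finset.mem_sdiff.2 ⟨Finset.mem_union_right _ hx1, hx2⟩,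
          Finset.mem_sdiff.2 ⟨Finset.mem_union_left _ h2, fun hh => notQ hd h2 (hJ hh)⟩⟩

end Graft2
end FinPoset

namespace FinPoset
variable {α : Type*} [DecidableEq α]

theorem mem_circSet {A : FinPoset α} {I : Finset α} :
    I ∈ A.circSet ↔ I ⊆ A.carrier ∧ A.Circ I := by
  simp [circSet, Finset.mem_filter, Finset.mem_powerset]

omit [DecidableEq α] in
theorem mem_below {A : FinPoset α} {I : Finset α} {x : α} [DecidableEq α] :
    x ∈ A.below I ↔ (x ∈ A.carrier ∧ x ∉ I) ∧ ∃ y ∈ I, A.le x y := by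
  simp [below, Finset.mem_filter, Finset.mem_sdiff]

section Graft3
variable {P Q : FinPoset α} {v : α}
variable (hd : Disjoint P.carrier Q.carrier) (hv : v ∈ Q.carrier)
local notation "R" => graftAux P Q v hd hv

/-- upward strictness transfer -/
theorem lt_toQ {w x : α} (h : (R).lt w x) (hx : x ∈ Q.carrier) : Q.lt w x :=
  ⟨le_toQ hd hv h.1 hx, h.2⟩

theorem lt_ofQ {w x : α} (h : Q.lt w x) : (R).lt w x :=
  ⟨Or.inr (Or.inl h.1), h.2⟩

theorem lt_wP {w x : α} (hwv : Q.le w v) (hwQ : w ∈ Q.carrier) (hx : x ∈ P.carrier) :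
    (R).lt w x :=
  ⟨Or.inr (Or.inr ⟨hwv, hx⟩), fun h => notP hd hwQ (h ▸ hx)⟩

/-- `below_R (X₁ ∪ J) = below_Q J` when `v ∈ J ⊆ X₂`. -/
theorem below_union {J : Finset α} (hJ : J ⊆ Q.carrier) (hvJ : v ∈ J) :
    (R).below (P.carrier ∪ J) = Q.below J := by
  ext x
  simp only [mem_below, R_carrier, Finset.mem_union]
  constructor
  · rintro ⟨⟨hxc, hxn⟩, y, hy, hle⟩
    have hxq : x ∈ Q.carrier := hxc.resolve_left (fun hp => hxn (Or.inl hp))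
    have hxnJ : x ∉ J := fun hh => hxn (Or.inr hh)
    rcases hy with hyP | hyJ
    · exact ⟨⟨hxq, hxnJ⟩, v, hvJ, le_QP hd hv hle hxq hyP⟩
    · exact ⟨⟨hxq, hxnJ⟩, y, hyJ, le_toQ hd hv hle (hJ hyJ)⟩
  · rintro ⟨⟨hxq, hxn⟩, y, hy, hle⟩
    refine ⟨⟨Or.inr hxq, ?_⟩, y, Or.inr hy, Or.inr (Or.inl hle)⟩
    rintro (hp | hj)
    · exact notP hd hxq hp
    · exact hxn hj

/-- `below_R J = below_Q J` when `J ⊆ X₂`. -/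
theorem below_J {J : Finset α} (hJ : J ⊆ Q.carrier) :
    (R).below J = Q.below J := by
  ext x
  simp only [mem_below, R_carrier, Finset.mem_union]
  constructor
  · rintro ⟨⟨hxc, hxn⟩, y, hy, hle⟩
    have hq := le_toQ hd hv hle (hJ hy)
    exact ⟨⟨(Q.mem_of_le hq).1, hxn⟩, y, hy, hq⟩
  · rintro ⟨⟨hxq, hxn⟩, y, hy, hle⟩
    exact ⟨⟨Or.inr hxq, hxn⟩, y, hy, Or.inr (Or.inl hle)⟩

/-- `below_R X₁ = {v}` when `v` is minimal in `Q`. -/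
theorem below_P (hPne : P.carrier.Nonempty) (hvmin : v ∈ Q.minSet) :
    (R).below P.carrier = {v} := by
  ext x
  simp only [mem_below, R_carrier, Finset.mem_union, Finset.mem_singleton]
  constructor
  · rintro ⟨⟨hxc, hxn⟩, y, hy, hle⟩
    have hxq : x ∈ Q.carrier := hxc.resolve_left hxn
    exact (mem_minSet.1 hvmin).2 x (le_QP hd hv hle hxq hy)
  · rintro rfl
    obtain ⟨p, hp⟩ := hPne
    exact ⟨⟨Or.inr hv, notP hd hv⟩, p, hp, le_vP hd hv hp⟩

/-- connectivity within a subset lifts from `Q` to `R`. -/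
theorem connOn_R_of_Q {S : Set α} (h : Q.ConnOn S) : (graftAux P Q v hd hv).ConnOn S := by
  intro x hx y hy
  exact Relation.ReflTransGen.mono
    (fun a b hab => ⟨hab.1, hab.2.1,
      hab.2.2.imp (fun t => Or.inr (Or.inl t)) (fun t => Or.inr (Or.inl t))⟩) _ _
    (h x hx y hy)

omit [DecidableEq α] in
theorem connRel_symm {A : FinPoset α} {S : Set α} :
    Symmetric (fun a b => a ∈ S ∧ b ∈ S ∧ (A.le a b ∨ A.le b a)) :=
  fun _ _ h => ⟨h.2.1, h.1, h.2.2.symm⟩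

/-- connectivity of `X₁ ∪ J` in `R`, when `v ∈ J` and `J` is `Q`-connected. -/
theorem connOn_union (hPconn : P.ConnOn ↑P.carrier) {J : Finset α}
    (hQJ : Q.ConnOn ↑J) (hJ : J ⊆ Q.carrier) (hvJ : v ∈ J) :
    (graftAux P Q v hd hv).ConnOn ↑(P.carrier ∪ J) := by
  set S : Set α := ↑(P.carrier ∪ J) with hS
  have hvS : v ∈ S := by simp [hS, hvJ]
  have key : ∀ x ∈ S, Relation.ReflTransGen
      (fun a b => a ∈ S ∧ b ∈ S ∧ ((graftAux P Q v hd hv).le a b ∨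
        (graftAux P Q v hd hv).le b a)) x v := by
    intro x hx
    have hx' : x ∈ P.carrier ∪ J := by simpa [hS] using hx
    rcases Finset.mem_union.1 hx' with hxP | hxJ
    · exact Relation.ReflTransGen.single ⟨hx, hvS, Or.inr (le_vP hd hv hxP)⟩
    · refine Relation.ReflTransGen.mono
        (fun a b hab => ⟨?_, ?_, hab.2.2.imp (fun t => Or.inr (Or.inl t))
          (fun t => Or.inr (Or.inl t))⟩) _ _ (hQJ x (by simpa using hxJ) v (by simpa using hvJ))
      · simp only [hS, Finset.coe_union, Set.mem_union]
        exact Or.inr hab.1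
      · simp only [hS, Finset.coe_union, Set.mem_union]
        exact Or.inr hab.2.1
  intro x hx y hy
  exact (key x hx).trans
    ((@Relation.ReflTransGen.stdSymm _ _ ⟨fun _ _ h => connRel_symm h⟩).symm _ _ (key y hy))

/-- `X₁ ◎ R` when `v ∈ min(Q)`. -/
theorem circ_min (hPne : P.carrier.Nonempty) (hPconn : P.ConnOn ↑P.carrier)
    (hvmin : v ∈ Q.minSet) : P.carrier ∈ (graftAux P Q v hd hv).circSet := by
  refine mem_circSet.2 ⟨Finset.subset_union_left, v, below_P hd hv hPne hvmin, ?_, ?_, ?_, ?_, ?_⟩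
  · rw [minSet_graftAux]; exact hvmin
  · exact ⟨hPne.choose, by simpa using hPne.choose_spec⟩
  · intro x hx
    have hxP : x ∈ P.carrier := by simpa using hx
    exact ⟨Finset.mem_union_left _ hxP, lt_wP hd hv (Q.le_refl v hv) hv hxP⟩
  · intro x hx y hy
    exact Relation.ReflTransGen.mono
      (fun a b hab => ⟨hab.1, hab.2.1, hab.2.2.imp Or.inl Or.inl⟩) _ _
      (hPconn x hx y hy)
  · intro x hx y hy hcomp
    have hxP : x ∈ P.carrier := by simpa using hx
    obtain ⟨hyc, hylt⟩ := hy
    rcases Finset.mem_union.1 hyc with hyP | hyQ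
    · simpa using hyP
    · exfalso
      rcases hcomp with h | h
      · exact notP hd hyQ (P.mem_of_le (le_fromP hd hv h hxP)).2
      · exact hylt.2 ((mem_minSet.1 hvmin).2 y (le_QP hd hv h hyQ hxP)).symm

/-- `(X₁ ∪ J) ◎ R` when `J ◎ Q` and `v ∈ J`. -/
theorem circ_in (hPne : P.carrier.Nonempty) (hPconn : P.ConnOn ↑P.carrier)
    {J : Finset α} (hJc : J ∈ Q.circSet) (hvJ : v ∈ J) :
    P.carrier ∪ J ∈ (graftAux P Q v hd hv).circSet := by
  obtain ⟨hJsub, w, hbel, hwmin, hne, hsub, hconn, hclos⟩ := mem_circSet.1 hJc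
  have hwQ : w ∈ Q.carrier := (mem_minSet.1 hwmin).1
  have hwv : Q.lt w v := (hsub (by simpa using hvJ)).2
  refine mem_circSet.2 ⟨?_, w, ?_, ?_, ?_, ?_, ?_, ?_⟩
  · exact Finset.union_subset Finset.subset_union_left
      (hJsub.trans Finset.subset_union_right)
  · rw [below_union hd hv hJsub hvJ]; exact hbel
  · rw [minSet_graftAux]; exact hwmin
  · exact ⟨v, by simp [hvJ]⟩
  · intro x hx
    have hx' : x ∈ P.carrier ∪ J := by simpa using hx
    rcases Finset.mem_union.1 hx' with hxP | hxJ
    · exact ⟨Finset.mem_union_left _ hxP, lt_wP hd hv hwv.1 hwQ hxP⟩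
    · have := hsub (by simpa using hxJ)
      exact ⟨Finset.mem_union_right _ this.1, lt_ofQ hd hv this.2⟩
  · exact connOn_union hd hv hPconn hconn hJsub hvJ
  · intro x hx y hy hcomp
    obtain ⟨hyc, hylt⟩ := hy
    rcases Finset.mem_union.1 hyc with hyP | hyQ
    · simp [hyP]
    · have hyQlt : Q.lt w y := lt_toQ hd hv hylt hyQ
      have hx' : x ∈ P.carrier ∪ J := by simpa using hx
      have hyJ : y ∈ J := by
        rcases Finset.mem_union.1 hx' with hxP | hxJ
        · have hyv : Q.le y v := by
            rcases hcomp with h | h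
            · exact absurd (P.mem_of_le (le_fromP hd hv h hxP)).2 (notP hd hyQ)
            · exact le_QP hd hv h hyQ hxP
          have := hclos v (by simpa using hvJ) y ⟨hyQ, hyQlt⟩ (Or.inr hyv)
          simpa using this
        · have hxQ : x ∈ Q.carrier := hJsub hxJ
          have hQcomp : Q.le x y ∨ Q.le y x :=
            hcomp.imp (fun h => le_toQ hd hv h hyQ) (fun h => le_toQ hd hv h hxQ)
          have := hclos x (by simpa using hxJ) y ⟨hyQ, hyQlt⟩ hQcomp
          simpa using this
      simp [hyJ]

/-- `J ◎ R` when `J ◎ Q` and `v ∉ J`. -/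
theorem circ_out {J : Finset α} (hJc : J ∈ Q.circSet) (hvJ : v ∉ J) :
    J ∈ (graftAux P Q v hd hv).circSet := by
  obtain ⟨hJsub, w, hbel, hwmin, hne, hsub, hconn, hclos⟩ := mem_circSet.1 hJc
  have hwQ : w ∈ Q.carrier := (mem_minSet.1 hwmin).1
  have key : ∀ q ∈ J, ¬ Q.le q v := by
    intro q hq hqv
    have hwq : Q.lt w q := (hsub (by simpa using hq)).2
    have hwne : w ≠ v := by
      rintro rfl
      exact hwq.2 (Q.le_antisymm hwq.1 hqv)
    have hvJ' := hclos q (by simpa using hq) v ⟨hv, Q.le_trans hwq.1 hqv, hwne⟩ (Or.inl hqv)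
    exact hvJ (by simpa using hvJ')
  refine mem_circSet.2 ⟨hJsub.trans Finset.subset_union_right, w, ?_, ?_, hne, ?_, ?_, ?_⟩
  · rw [below_J hd hv hJsub]; exact hbel
  · rw [minSet_graftAux]; exact hwmin
  · intro x hx
    have := hsub hx
    exact ⟨Finset.mem_union_right _ this.1, lt_ofQ hd hv this.2⟩
  · exact connOn_R_of_Q hd hv hconn
  · intro x hx y hy hcomp
    have hxJ : x ∈ J := by simpa using hx
    have hxQ : x ∈ Q.carrier := hJsub hxJ
    obtain ⟨hyc, hylt⟩ := hy
    rcases Finset.mem_union.1 hyc with hyP | hyQ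
    · exfalso
      rcases hcomp with h | h
      · exact key x hxJ (le_QP hd hv h hxQ hyP)
      · exact notP hd hxQ (P.mem_of_le (le_fromP hd hv h hyP)).2
    · have hQcomp : Q.le x y ∨ Q.le y x :=
        hcomp.imp (fun h => le_toQ hd hv h hyQ) (fun h => le_toQ hd hv h hxQ)
      exact hclos x hx y ⟨hyQ, lt_toQ hd hv hylt hyQ⟩ hQcomp

/-- Completeness: every `I ◎ R` is of one of the three forms. -/
theorem circ_rev (hPne : P.carrier.Nonempty) (hPconn : P.ConnOn ↑P.carrier)
    {I : Finset α} (hI : I ∈ (graftAux P Q v hd hv).circSet) :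
    (I = P.carrier ∧ v ∈ Q.minSet) ∨ (∃ J ∈ Q.circSet, v ∈ J ∧ I = P.carrier ∪ J) ∨
      (∃ J ∈ Q.circSet, v ∉ J ∧ I = J) := by
  obtain ⟨hIsub, w, hbel, hwmin, hne, hsub, hconn, hclos⟩ := mem_circSet.1 hI
  rw [minSet_graftAux] at hwmin
  have hwQ : w ∈ Q.carrier := (mem_minSet.1 hwmin).1
  by_cases hPI : ∃ p ∈ I, p ∈ P.carrier
  · obtain ⟨p₀, hp₀I, hp₀P⟩ := hPI
    have hwv : Q.le w v :=
      le_QP hd hv (hsub (by simpa using hp₀I)).2.1 hwQ hp₀P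
    -- all of X₁ is inside I
    have hX1I : ∀ p ∈ P.carrier, p ∈ I := by
      intro p hp
      have hgen : ∀ q, Relation.ReflTransGen
          (fun a b => a ∈ (↑P.carrier : Set α) ∧ b ∈ ↑P.carrier ∧ (P.le a b ∨ P.le b a))
          p₀ q → q ∈ I := by
        intro q hq
        induction hq with
        | refl => exact hp₀I
        | tail _ step ih =>
          obtain ⟨hbP, hcP, hcomp⟩ := step
          have := hclos _ (by simpa using ih) _
            ⟨Finset.mem_union_left _ hcP, lt_wP hd hv hwv hwQ hcP⟩
            (hcomp.imp Or.inl Or.inl)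
          simpa using this
      exact hgen p (hPconn p₀ (by simpa using hp₀P) p (by simpa using hp))
    by_cases hwvne : w = v
    · -- I = X₁
      left
      refine ⟨Finset.Subset.antisymm ?_ (fun p hp => hX1I p hp), hwvne ▸ hwmin⟩
      intro x hxI
      have hgen : ∀ q, Relation.ReflTransGen
          (fun a b => a ∈ (↑I : Set α) ∧ b ∈ ↑I ∧
            ((graftAux P Q v hd hv).le a b ∨ (graftAux P Q v hd hv).le b a))
          p₀ q → q ∈ P.carrier := by
        intro q hq
        induction hq with
        | refl => exact hp₀P
        | tail _ step ih =>
          obtain ⟨hbI, hcI, hcomp⟩ := step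
          rename_i b c _
          have hcI' : c ∈ I := by simpa using hcI
          rcases Finset.mem_union.1 (hIsub hcI') with hcP | hcQ
          · exact hcP
          · exfalso
            have hclt : Q.lt w c := lt_toQ hd hv (hsub (by simpa using hcI')).2 hcQ
            rcases hcomp with h | h
            · exact notP hd hcQ (P.mem_of_le (le_fromP hd hv h ih)).2
            · have hcv : Q.le c v := le_QP hd hv h hcQ ih
              rw [← hwvne] at hcv
              exact hclt.2 (Q.le_antisymm hclt.1 hcv)
      exact hgen x (hconn p₀ (by simpa using hp₀I) x (by simpa using hxI))
    · -- I = X₁ ∪ J with J = I ∩ X₂, v ∈ J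
      right; left
      have hwvlt : Q.lt w v := ⟨hwv, hwvne⟩
      have hvI : v ∈ I := by
        have := hclos p₀ (by simpa using hp₀I) v
          ⟨Finset.mem_union_right _ hv, lt_ofQ hd hv hwvlt⟩
          (Or.inr (le_vP hd hv hp₀P))
        simpa using this
      set J : Finset α := I ∩ Q.carrier with hJdef
      have hvJ : v ∈ J := Finset.mem_inter.2 ⟨hvI, hv⟩
      have hIeq : I = P.carrier ∪ J := by
        ext x
        simp only [Finset.mem_union, hJdef, Finset.mem_inter]
        constructor
        · intro hx
          rcases Finset.mem_union.1 (hIsub hx) with h | h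
          · exact Or.inl h
          · exact Or.inr ⟨hx, h⟩
        · rintro (h | ⟨h, -⟩)
          · exact hX1I x h
          · exact h
      have hJQ : J ⊆ Q.carrier := Finset.inter_subset_right
      -- the projection
      have hmemJ : ∀ c ∈ I, (if c ∈ Q.carrier then c else v) ∈ J := by
        intro c hc
        by_cases hcq : c ∈ Q.carrier
        · simpa [hcq, hJdef] using Finset.mem_inter.2 ⟨hc, hcq⟩
        · simpa [hcq] using hvJ
      have hconnJ : Q.ConnOn ↑J := by
        intro x hx y hy
        have hxJ : x ∈ J := by simpa using hx
        have hyJ : y ∈ J := by simpa using hy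
        have step : ∀ a b, (a ∈ (↑I : Set α) ∧ b ∈ ↑I ∧
            ((graftAux P Q v hd hv).le a b ∨ (graftAux P Q v hd hv).le b a)) →
            Relation.ReflTransGen
              (fun c d => c ∈ (↑J : Set α) ∧ d ∈ ↑J ∧ (Q.le c d ∨ Q.le d c))
              (if a ∈ Q.carrier then a else v) (if b ∈ Q.carrier then b else v) := by
          rintro a b ⟨haI, hbI, hcomp⟩
          have haI' : a ∈ I := by simpa using haI
          have hbI' : b ∈ I := by simpa using hbI
          by_cases haq : a ∈ Q.carrier <;> by_cases hbq : b ∈ Q.carrier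
          · refine Relation.ReflTransGen.single ?_
            simp only [if_pos haq, if_pos hbq]
            have ha' := hmemJ a haI'
            have hb' := hmemJ b hbI'
            rw [if_pos haq] at ha'
            rw [if_pos hbq] at hb'
            exact ⟨by simpa using ha', by simpa using hb',
              hcomp.imp (fun h => le_toQ hd hv h hbq) (fun h => le_toQ hd hv h haq)⟩
          · have hbp : b ∈ P.carrier := (Finset.mem_union.1 (hIsub hbI')).resolve_right hbq
            have hav : Q.le a v := by
              rcases hcomp with h | h
              · exact le_QP hd hv h haq hbp
              · exact absurd (P.mem_of_le (le_fromP hd hv h hbp)).2 (notP hd haq)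
            refine Relation.ReflTransGen.single ?_
            simp only [if_pos haq, if_neg hbq]
            have ha' := hmemJ a haI'
            rw [if_pos haq] at ha'
            exact ⟨by simpa using ha', by simpa using hvJ, Or.inl hav⟩
          · have hap : a ∈ P.carrier := (Finset.mem_union.1 (hIsub haI')).resolve_right haq
            have hbv : Q.le b v := by
              rcases hcomp with h | h
              · exact absurd (P.mem_of_le (le_fromP hd hv h hap)).2 (notP hd hbq)
              · exact le_QP hd hv h hbq hap
            refine Relation.ReflTransGen.single ?_
            simp only [if_neg haq, if_pos hbq]
            have hb' := hmemJ b hbI'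
            rw [if_pos hbq] at hb'
            exact ⟨by simpa using hvJ, by simpa using hb', Or.inr hbv⟩
          · simp only [if_neg haq, if_neg hbq]
            exact Relation.ReflTransGen.refl
        have := Relation.ReflTransGen.lift' (fun a => if a ∈ Q.carrier then a else v) step _ _
          (hconn x (by simp [hIeq]; exact Or.inr (by simpa using hx)) y
            (by simp [hIeq]; exact Or.inr (by simpa using hy)))
        simpa [Function.onFun, if_pos (hJQ hxJ), if_pos (hJQ hyJ)] using this
      refine ⟨J, mem_circSet.2 ⟨hJQ, w, ?_, hwmin, ⟨v, by simpa using hvJ⟩, ?_, hconnJ, ?_⟩,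
        hvJ, hIeq⟩
      · rw [← below_union hd hv hJQ hvJ, ← hIeq]; exact hbel
      · intro x hx
        have hxJ : x ∈ J := by simpa using hx
        have hxQ : x ∈ Q.carrier := hJQ hxJ
        have hxI : x ∈ I := (Finset.mem_inter.1 hxJ).1
        exact ⟨hxQ, lt_toQ hd hv (hsub (by simpa using hxI)).2 hxQ⟩
      · intro x hx y hy hQcomp
        have hxJ : x ∈ J := by simpa using hx
        have hxI : x ∈ I := (Finset.mem_inter.1 hxJ).1
        obtain ⟨hyQ, hylt⟩ := hy
        have := hclos x (by simpa using hxI) y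
          ⟨Finset.mem_union_right _ hyQ, lt_ofQ hd hv hylt⟩
          (hQcomp.imp (fun h => Or.inr (Or.inl h)) (fun h => Or.inr (Or.inl h)))
        have hyI : y ∈ I := by simpa using this
        simpa [hJdef] using Finset.mem_inter.2 ⟨hyI, hyQ⟩
  · -- I ⊆ X₂
    right; right
    push_neg at hPI
    have hIQ : ∀ x ∈ I, x ∈ Q.carrier :=
      fun x hx => (Finset.mem_union.1 (hIsub hx)).resolve_left (hPI x hx)
    have hvnI : v ∉ I := by
      intro hvI
      have hwvlt : Q.lt w v := lt_toQ hd hv (hsub (by simpa using hvI)).2 hv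
      obtain ⟨p, hp⟩ := hPne
      have := hclos v (by simpa using hvI) p
        ⟨Finset.mem_union_left _ hp, lt_wP hd hv hwvlt.1 hwQ hp⟩
        (Or.inl (le_vP hd hv hp))
      exact hPI p (by simpa using this) hp
    refine ⟨I, mem_circSet.2 ⟨fun x hx => hIQ x hx, w, ?_, hwmin, hne, ?_, ?_, ?_⟩, hvnI, rfl⟩
    · rw [← below_J hd hv (fun x hx => hIQ x hx)]; exact hbel
    · intro x hx
      have hxI : x ∈ I := by simpa using hx
      have hxQ : x ∈ Q.carrier := hIQ x hxI
      exact ⟨hxQ, lt_toQ hd hv (hsub hx).2 hxQ⟩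
    · intro x hx y hy
      refine Relation.ReflTransGen.mono ?_ _ _ (hconn x hx y hy)
      rintro a b ⟨haI, hbI, hcomp⟩
      have haQ : a ∈ Q.carrier := hIQ a (by simpa using haI)
      have hbQ : b ∈ Q.carrier := hIQ b (by simpa using hbI)
      exact ⟨haI, hbI,
        hcomp.imp (fun h => le_toQ hd hv h hbQ) (fun h => le_toQ hd hv h haQ)⟩
    · intro x hx y hy hQcomp
      obtain ⟨hyQ, hylt⟩ := hy
      exact hclos x hx y ⟨Finset.mem_union_right _ hyQ, lt_ofQ hd hv hylt⟩
        (hQcomp.imp (fun h => Or.inr (Or.inl h)) (fun h => Or.inr (Or.inl h)))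

/-- The circ sets of `R = P ↘_v Q`. -/
theorem circSet_graftAux (hPne : P.carrier.Nonempty) (hPconn : P.ConnOn ↑P.carrier) :
    (graftAux P Q v hd hv).circSet =
      (if v ∈ Q.minSet then ({P.carrier} : Finset (Finset α)) else ∅) ∪
        Q.circSet.image (fun J => if v ∈ J then P.carrier ∪ J else J) := by
  ext I
  simp only [Finset.mem_union, Finset.mem_image]
  constructor
  · intro hI
    rcases circ_rev hd hv hPne hPconn hI with ⟨h1, h2⟩ | ⟨J, hJ, hvJ, hIeq⟩ | ⟨J, hJ, hvJ, hIeq⟩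
    · exact Or.inl (by simp [h2, h1])
    · exact Or.inr ⟨J, hJ, by simp [hvJ, hIeq]⟩
    · exact Or.inr ⟨J, hJ, by simp [hvJ, hIeq]⟩
  · rintro (h | ⟨J, hJ, rfl⟩)
    · by_cases hm : v ∈ Q.minSet
      · rw [if_pos hm] at h
        rw [Finset.mem_singleton.1 h]
        exact circ_min hd hv hPne hPconn hm
      · rw [if_neg hm] at h
        exact absurd h (Finset.notMem_empty I)
    · by_cases hvJ : v ∈ J
      · rw [if_pos hvJ]
        exact circ_in hd hv hPne hPconn hJ hvJ
      · rw [if_neg hvJ]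
        exact circ_out hd hv hJ hvJ

include hd in
theorem gJ_inter {J : Finset α} (hJ : J ⊆ Q.carrier) :
    (if v ∈ J then P.carrier ∪ J else J) ∩ Q.carrier = J := by
  by_cases hvJ : v ∈ J
  · rw [if_pos hvJ]
    ext x
    simp only [Finset.mem_inter, Finset.mem_union]
    constructor
    · rintro ⟨h1 | h1, h2⟩
      · exact absurd h2 (notQ hd h1)
      · exact h1
    · exact fun h => ⟨Or.inr h, hJ h⟩
  · rw [if_neg hvJ]
    exact Finset.inter_eq_left.2 hJ

include hd in
theorem g_injOn : Set.InjOn (fun J => if v ∈ J then P.carrier ∪ J else J) ↑Q.circSet := by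
  intro J1 h1 J2 h2 heq
  have hs1 : J1 ⊆ Q.carrier := (mem_circSet.1 (by simpa using h1)).1
  have hs2 : J2 ⊆ Q.carrier := (mem_circSet.1 (by simpa using h2)).1
  have heq2 : (if v ∈ J1 then P.carrier ∪ J1 else J1) =
      (if v ∈ J2 then P.carrier ∪ J2 else J2) := heq
  rw [← gJ_inter hd (v := v) hs1, ← gJ_inter hd (v := v) hs2, heq2]

include hd in
theorem P_notin_image :
    P.carrier ∉ Q.circSet.image (fun J => if v ∈ J then P.carrier ∪ J else J) := by
  intro h
  obtain ⟨J, hJ, heq⟩ := Finset.mem_image.1 h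
  obtain ⟨hJsub, _, _, _, hne, _⟩ := mem_circSet.1 hJ
  obtain ⟨q, hq⟩ := hne
  have hqJ : q ∈ J := by simpa using hq
  have hqP : q ∈ P.carrier := by
    rw [← heq]
    by_cases hvJ : v ∈ J
    · simp [hvJ, hqJ]
    · simp [hvJ, hqJ]
  exact notQ hd hqP (hJsub hqJ)

/-- `δ(P ↘_v Q)` in closed form. -/
theorem delta_graftAux (hPne : P.carrier.Nonempty) (hPconn : P.ConnOn ↑P.carrier) :
    (graftAux P Q v hd hv).delta =
      ((Q.minSet.card : ℚ))⁻¹ •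
        ((if v ∈ Q.minSet then Finsupp.single (P, Q) (1 : ℚ) else 0) +
          ∑ J ∈ Q.circSet,
            (if v ∈ J then
              Finsupp.single (graft P (Q.restrict J) v, Q.restrict (Q.carrier \ J)) (1 : ℚ)
            else
              Finsupp.single (Q.restrict J, graft P (Q.restrict (Q.carrier \ J)) v) (1 : ℚ))) := by
  rw [delta, minSet_graftAux, circSet_graftAux hd hv hPne hPconn]
  congr 1
  rw [Finset.sum_union]
  · congr 1
    · by_cases hm : v ∈ Q.minSet
      · rw [if_pos hm, if_pos hm, Finset.sum_singleton, restrict_P hd hv]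
        have : (graftAux P Q v hd hv).carrier \ P.carrier =
            (graftAux P Q v hd hv).carrier \ P.carrier := rfl
        rw [restrict_Pc hd hv]
      · rw [if_neg hm, if_neg hm, Finset.sum_empty]
    · rw [Finset.sum_image (fun x hx y hy h => g_injOn hd (v := v)
        (Finset.mem_coe.2 hx) (Finset.mem_coe.2 hy) h)]
      refine Finset.sum_congr rfl ?_
      intro J hJ
      have hJsub : J ⊆ Q.carrier := (mem_circSet.1 hJ).1
      by_cases hvJ : v ∈ J
      · simp only [if_pos hvJ]
        rw [restrict_union hd hv J hJsub hvJ, restrict_unionc hd hv J hJsub]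
      · simp only [if_neg hvJ]
        rw [restrict_J hd hv J hJsub, restrict_Jc hd hv J hJsub hvJ]
  · by_cases hm : v ∈ Q.minSet
    · rw [if_pos hm]
      simp only [Finset.disjoint_singleton_left]
      exact P_notin_image hd (v := v)
    · rw [if_neg hm]
      exact Finset.disjoint_empty_left _

end Graft3
end FinPoset

/-- Compatibility of the coproduct `δ` with the pre-Lie product `↘`:
`δ(P ↘ Q) = P ⊗ Q + (P ⊗ 1) ↘ δ(Q) + (1 ⊗ P) ↘ δ(Q)`, in the explicit form
`Σ_{v ∈ X₂} δ(P ↘_v Q) = P ⊗ Q + (1/|min(Q)|) Σ_{J ◎ Q}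
[(P ↘ J) ⊗ (Q \ J) + J ⊗ (P ↘ (Q \ J))]`. -/
theorem delta_graft {α : Type*} [DecidableEq α] (P Q : FinPoset α)
    (hP : P.Connected) (hQ : Q.Connected) (hd : Disjoint P.carrier Q.carrier) :
    (∑ v ∈ Q.carrier, FinPoset.delta (FinPoset.graft P Q v))
      = Finsupp.single (P, Q) (1 : ℚ)
        + ((Q.minSet.card : ℚ))⁻¹ • ∑ J ∈ Q.circSet,
          ((∑ v ∈ (Q.restrict J).carrier,
              Finsupp.single
                (FinPoset.graft P (Q.restrict J) v, Q.restrict (Q.carrier \ J)) (1 : ℚ))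
            + ∑ v ∈ (Q.restrict (Q.carrier \ J)).carrier,
              Finsupp.single
                (Q.restrict J, FinPoset.graft P (Q.restrict (Q.carrier \ J)) v) (1 : ℚ)) := by
  classical
  obtain ⟨hPne, hPconn⟩ := hP
  have hc : (Q.minSet.card : ℚ) ≠ 0 :=
    Nat.cast_ne_zero.2 (FinPoset.minSet_nonempty Q hQ.1).card_pos.ne'
  have step : ∀ v ∈ Q.carrier, FinPoset.delta (FinPoset.graft P Q v) =
      ((Q.minSet.card : ℚ))⁻¹ •
        ((if v ∈ Q.minSet then Finsupp.single (P, Q) (1 : ℚ) else 0) +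
          ∑ J ∈ Q.circSet,
            (if v ∈ J then
              Finsupp.single
                (FinPoset.graft P (Q.restrict J) v, Q.restrict (Q.carrier \ J)) (1 : ℚ)
            else
              Finsupp.single
                (Q.restrict J, FinPoset.graft P (Q.restrict (Q.carrier \ J)) v) (1 : ℚ))) := by
    intro v hv
    rw [FinPoset.graft_eq hd hv]
    exact FinPoset.delta_graftAux hd hv hPne hPconn
  rw [Finset.sum_congr rfl step, ← Finset.smul_sum, Finset.sum_add_distrib]
  have h1 : (∑ v ∈ Q.carrier, if v ∈ Q.minSet then Finsupp.single (P, Q) (1 : ℚ) else 0)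
      = Q.minSet.card • Finsupp.single (P, Q) (1 : ℚ) := by
    have hsub : Q.minSet ⊆ Q.carrier := Finset.filter_subset _ _
    rw [Finset.sum_ite_mem, Finset.inter_eq_right.2 hsub, Finset.sum_const]
  have h2 : (∑ v ∈ Q.carrier, ∑ J ∈ Q.circSet,
        (if v ∈ J then
          Finsupp.single
            (FinPoset.graft P (Q.restrict J) v, Q.restrict (Q.carrier \ J)) (1 : ℚ)
        else
          Finsupp.single
            (Q.restrict J, FinPoset.graft P (Q.restrict (Q.carrier \ J)) v) (1 : ℚ)))
      = ∑ J ∈ Q.circSet,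
          ((∑ v ∈ (Q.restrict J).carrier,
              Finsupp.single
                (FinPoset.graft P (Q.restrict J) v, Q.restrict (Q.carrier \ J)) (1 : ℚ))
            + ∑ v ∈ (Q.restrict (Q.carrier \ J)).carrier,
              Finsupp.single
                (Q.restrict J, FinPoset.graft P (Q.restrict (Q.carrier \ J)) v) (1 : ℚ)) := by
    rw [Finset.sum_comm]
    refine Finset.sum_congr rfl fun J hJ => ?_
    rw [Finset.sum_ite]
    have e1 : Q.carrier.filter (fun v => v ∈ J) = (Q.restrict J).carrier := by
      rw [FinPoset.restrict_carrier]
      ext x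
      simp only [Finset.mem_filter, Finset.mem_inter]
    have e2 : Q.carrier.filter (fun v => ¬ v ∈ J) = (Q.restrict (Q.carrier \ J)).carrier := by
      rw [FinPoset.restrict_carrier]
      ext x
      simp only [Finset.mem_filter, Finset.mem_inter, Finset.mem_sdiff]
      tauto
    rw [e1, e2]
  rw [h1, h2, smul_add]
  congr 1
  rw [← Nat.cast_smul_eq_nsmul ℚ, smul_smul, inv_mul_cancel₀ hc, one_smul]
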